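/- arXiv:2009.09552 — 3 statements merged into one kernel-verified Lean document; each statement's English description precedes it below -/
import Mathlib

section
/- Let X be a Banach space with dual X*, and let 0 < α, β < 1 with α + β > 1. If f ∈ C^α([0,T]; X) and g ∈ C^β([0,T]; X*), then the Young integral t ↦ ∫₀ᵗ ⟨g_r, df_r⟩ is well-defined and there is a constant C (depending only on α, β, T) such that the map t ↦ ∫₀ᵗ ⟨g_r, df_r⟩ belongs to C^α([0,T]; ℝ) with ‖∫₀^· ⟨g_r, df_r⟩‖_{C^α} ≤ C ‖g‖_{C^β([0,T];X*)} ‖f‖_{C^α([0,T];X)}. -/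
open Set Finset

noncomputable def youngC (θ : ℝ) : ℝ := (1 - ((2:ℝ)/3)^(θ-1))⁻¹

lemma youngRho_lt_one {θ : ℝ} (hθ : 1 < θ) : ((2:ℝ)/3)^(θ-1) < 1 :=
  Real.rpow_lt_one (by norm_num) (by norm_num) (by linarith)

lemma youngC_pos {θ : ℝ} (hθ : 1 < θ) : 0 < youngC θ := by
  have := youngRho_lt_one hθ
  unfold youngC
  exact inv_pos.mpr (by linarith)

lemma youngC_key {θ : ℝ} (hθ : 1 < θ) :
    youngC θ * ((2:ℝ)/3)^(θ-1) + 1 = youngC θ := by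
  have h1 := youngRho_lt_one hθ
  have h2 : (1 : ℝ) - ((2:ℝ)/3)^(θ-1) ≠ 0 := by linarith
  unfold youngC
  field_simp
  ring

lemma young_split {θ : ℝ} (hθ : 1 < θ) (a b : ℕ) (ha : 1 ≤ a) (hab : a ≤ b)
    (hba : b ≤ a + 1) :
    youngC θ * ((a:ℝ)^θ + (b:ℝ)^θ) + ((a:ℝ)+(b:ℝ))^θ ≤ youngC θ * ((a:ℝ)+(b:ℝ))^θ := by
  have ha' : (1:ℝ) ≤ (a:ℝ) := by exact_mod_cast ha
  have hab' : (a:ℝ) ≤ (b:ℝ) := by exact_mod_cast hab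
  have hba' : (b:ℝ) ≤ (a:ℝ) + 1 := by exact_mod_cast hba
  have ha0 : (0:ℝ) < a := by linarith
  have hb0 : (0:ℝ) < b := by linarith
  have hm : (0:ℝ) < (a:ℝ) + b := by linarith
  have hθ0 : (0:ℝ) ≤ θ - 1 := by linarith
  set ρ : ℝ := ((2:ℝ)/3)^(θ-1) with hρ
  have hρ0 : 0 ≤ ρ := Real.rpow_nonneg (by norm_num) _
  have hc := youngC_pos hθ
  have hkey := youngC_key hθ
  have step1 : (a:ℝ)^θ ≤ (a:ℝ) * (b:ℝ)^(θ-1) := by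
    have e : (a:ℝ)^θ = (a:ℝ)^(1:ℝ) * (a:ℝ)^(θ-1) := by
      rw [← Real.rpow_add ha0]; ring_nf
    rw [e, Real.rpow_one]
    exact mul_le_mul_of_nonneg_left
      (Real.rpow_le_rpow (le_of_lt ha0) hab' hθ0) (le_of_lt ha0)
  have step2 : (b:ℝ)^θ = (b:ℝ) * (b:ℝ)^(θ-1) := by
    have e : (b:ℝ)^θ = (b:ℝ)^(1:ℝ) * (b:ℝ)^(θ-1) := by
      rw [← Real.rpow_add hb0]; ring_nf
    rw [e, Real.rpow_one]
  have step4 : (b:ℝ) ≤ (2/3) * ((a:ℝ)+(b:ℝ)) := by linarith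
  have step5 : (b:ℝ)^(θ-1) ≤ ρ * ((a:ℝ)+(b:ℝ))^(θ-1) := by
    calc (b:ℝ)^(θ-1) ≤ ((2/3) * ((a:ℝ)+(b:ℝ)))^(θ-1) :=
          Real.rpow_le_rpow (le_of_lt hb0) step4 hθ0
      _ = ρ * ((a:ℝ)+(b:ℝ))^(θ-1) := Real.mul_rpow (by norm_num) (le_of_lt hm)
  have step6 : ((a:ℝ)+(b:ℝ))^θ = ((a:ℝ)+(b:ℝ)) * ((a:ℝ)+(b:ℝ))^(θ-1) := by
    have e : ((a:ℝ)+(b:ℝ))^θ = ((a:ℝ)+(b:ℝ))^(1:ℝ) * ((a:ℝ)+(b:ℝ))^(θ-1) := by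
      rw [← Real.rpow_add hm]; ring_nf
    rw [e, Real.rpow_one]
  have h : (a:ℝ)^θ + (b:ℝ)^θ ≤ ρ * ((a:ℝ)+(b:ℝ))^θ := by
    have hbb : (0:ℝ) ≤ (b:ℝ)^(θ-1) := Real.rpow_nonneg (le_of_lt hb0) _
    calc (a:ℝ)^θ + (b:ℝ)^θ ≤ ((a:ℝ)+(b:ℝ)) * (b:ℝ)^(θ-1) := by
          rw [step2] at *; nlinarith
      _ ≤ ((a:ℝ)+(b:ℝ)) * (ρ * ((a:ℝ)+(b:ℝ))^(θ-1)) :=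
          mul_le_mul_of_nonneg_left step5 (le_of_lt hm)
      _ = ρ * ((a:ℝ)+(b:ℝ))^θ := by rw [step6]; ring
  have hM : (0:ℝ) ≤ ((a:ℝ)+(b:ℝ))^θ := Real.rpow_nonneg (le_of_lt hm) _
  nlinarith [mul_le_mul_of_nonneg_left h (le_of_lt hc)]

section Young

variable {X : Type*} [NormedAddCommGroup X] [NormedSpace ℝ X]
variable (T α β Kf Kg : ℝ) (f : ℝ → X) (g : ℝ → (X →L[ℝ] ℝ))

/-- second-order increment bound -/
lemma young_delta
    (hf : ∀ s ∈ Icc (0:ℝ) T, ∀ t ∈ Icc (0:ℝ) T, ‖f t - f s‖ ≤ Kf * |t - s| ^ α)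
    (hg : ∀ s ∈ Icc (0:ℝ) T, ∀ t ∈ Icc (0:ℝ) T, ‖g t - g s‖ ≤ Kg * |t - s| ^ β)
    {x y z : ℝ} (hx : x ∈ Icc (0:ℝ) T) (hy : y ∈ Icc (0:ℝ) T) (hz : z ∈ Icc (0:ℝ) T) :
    |g x (f z - f x) - g x (f y - f x) - g y (f z - f y)|
      ≤ (Kg * |y - x| ^ β) * (Kf * |z - y| ^ α) := by
  have e1 : g x (f z - f x) - g x (f y - f x) - g y (f z - f y)
      = (g x - g y) (f z - f y) := by
    rw [ContinuousLinearMap.sub_apply]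
    rw [show f z - f x = (f z - f y) + (f y - f x) by abel, map_add]
    ring
  rw [e1, ← Real.norm_eq_abs]
  calc ‖(g x - g y) (f z - f y)‖ ≤ ‖g x - g y‖ * ‖f z - f y‖ :=
        (g x - g y).le_opNorm _
    _ ≤ (Kg * |y - x| ^ β) * (Kf * |z - y| ^ α) := by
        have h1 := hg y hy x hx
        have h2 := hf y hy z hz
        have h3 : (0:ℝ) ≤ ‖f z - f y‖ := norm_nonneg _
        have h4 : (0:ℝ) ≤ ‖g x - g y‖ := norm_nonneg _
        rw [abs_sub_comm x y] at h1
        exact mul_le_mul h1 h2 h3 (le_trans h4 h1)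

/-- grid point -/
noncomputable def dyadicPt (T : ℝ) (n j : ℕ) : ℝ := (j:ℝ) * (T / 2^n)

lemma dyadicPt_mem (hT : 0 < T) {n j : ℕ} (hj : j ≤ 2^n) :
    dyadicPt T n j ∈ Icc (0:ℝ) T := by
  have h2 : (0:ℝ) < 2^n := by positivity
  constructor
  · unfold dyadicPt; positivity
  · have hj' : (j:ℝ) ≤ (2:ℝ)^n := by exact_mod_cast hj
    unfold dyadicPt
    calc (j:ℝ) * (T/2^n) ≤ (2^n:ℝ) * (T/2^n) :=
          mul_le_mul_of_nonneg_right hj' (le_of_lt (by positivity))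
      _ = T := by field_simp

/-- The core sewing estimate over arithmetic progressions of dyadic points,
    by binary splitting. -/
lemma young_core (hT : 0 < T) (hα : α ∈ Set.Ioo (0:ℝ) 1) (hβ : β ∈ Set.Ioo (0:ℝ) 1)
    (hαβ : 1 < α + β) (hKf : 0 ≤ Kf) (hKg : 0 ≤ Kg)
    (hf : ∀ s ∈ Icc (0:ℝ) T, ∀ t ∈ Icc (0:ℝ) T, ‖f t - f s‖ ≤ Kf * |t - s| ^ α)
    (hg : ∀ s ∈ Icc (0:ℝ) T, ∀ t ∈ Icc (0:ℝ) T, ‖g t - g s‖ ≤ Kg * |t - s| ^ β) :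
    ∀ (n m k : ℕ), k + m ≤ 2^n →
    |(∑ j ∈ Finset.Ico k (k+m),
        g (dyadicPt T n j) (f (dyadicPt T n (j+1)) - f (dyadicPt T n j)))
      - g (dyadicPt T n k) (f (dyadicPt T n (k+m)) - f (dyadicPt T n k))|
    ≤ youngC (α+β) * (Kg * Kf) * ((m:ℝ) * (T / 2^n)) ^ (α+β) := by
  intro n m
  induction m using Nat.strong_induction_on with
  | _ m ih =>
  intro k hk
  have hc := youngC_pos hαβ
  have hK : 0 ≤ Kg * Kf := mul_nonneg hKg hKf
  have h2 : (0:ℝ) < 2^n := by positivity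
  have hh : (0:ℝ) < T / 2^n := by positivity
  have hrpow0 : (0:ℝ) ≤ ((m:ℝ) * (T / 2^n)) ^ (α+β) :=
    Real.rpow_nonneg (by positivity) _
  rcases Nat.lt_or_ge m 2 with hm | hm
  · interval_cases m
    · simp only [Nat.add_zero, Finset.Ico_self, Finset.sum_empty, sub_self, map_zero]
      simpa using mul_nonneg (mul_nonneg (le_of_lt hc) hK) hrpow0
    · rw [show k + 1 = k + 1 from rfl, Finset.sum_Ico_eq_sum_range]
      simp only [Nat.add_sub_cancel_left, Finset.range_one, Finset.sum_singleton,
        Nat.add_zero]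
      rw [sub_self, abs_zero]
      exact mul_nonneg (mul_nonneg (le_of_lt hc) hK) hrpow0
  · -- m ≥ 2 : binary splitting
    have hθ : 0 < α + β := by linarith
    set a := m / 2 with hadef
    set b := m - m / 2 with hbdef
    have hab : a + b = m := by omega
    have ha1 : 1 ≤ a := by omega
    have haltm : a < m := by omega
    have hbltm : b < m := by omega
    have haleb : a ≤ b := by omega
    have hblea : b ≤ a + 1 := by omega
    have hk1 : k + a ≤ 2^n := by omega
    have hk2 : (k + a) + b ≤ 2^n := by omega
    have hkm : (k + a) + b = k + m := by omega
    have hsplit : (∑ j ∈ Finset.Ico k (k+m),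
          g (dyadicPt T n j) (f (dyadicPt T n (j+1)) - f (dyadicPt T n j)))
        = (∑ j ∈ Finset.Ico k (k+a),
            g (dyadicPt T n j) (f (dyadicPt T n (j+1)) - f (dyadicPt T n j)))
          + (∑ j ∈ Finset.Ico (k+a) (k+m),
            g (dyadicPt T n j) (f (dyadicPt T n (j+1)) - f (dyadicPt T n j))) :=
      (Finset.sum_Ico_consecutive _ (by omega) (by omega)).symm
    have IH1 := ih a haltm k hk1
    have IH2 := ih b hbltm (k+a) hk2
    rw [hkm] at IH2
    -- distances between grid points
    have hdiff : ∀ (i j : ℕ), dyadicPt T n (i+j) - dyadicPt T n i = (j:ℝ)*(T/2^n) := by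
      intro i j; unfold dyadicPt; push_cast; ring
    have habs : ∀ (i j : ℕ), |dyadicPt T n (i+j) - dyadicPt T n i| = (j:ℝ)*(T/2^n) := by
      intro i j; rw [hdiff]; exact abs_of_nonneg (by positivity)
    -- the second order term
    have hδ := young_delta T α β Kf Kg f g hf hg
      (dyadicPt_mem T hT (n:=n) (j:=k) (by omega))
      (dyadicPt_mem T hT (n:=n) (j:=k+a) (by omega))
      (dyadicPt_mem T hT (n:=n) (j:=k+m) (by omega))
    rw [habs k a, show k + m = (k+a) + b from hkm.symm, habs (k+a) b, hkm] at hδ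
    have hδ' : |g (dyadicPt T n k) (f (dyadicPt T n (k+m)) - f (dyadicPt T n k))
        - g (dyadicPt T n k) (f (dyadicPt T n (k+a)) - f (dyadicPt T n k))
        - g (dyadicPt T n (k+a)) (f (dyadicPt T n (k+m)) - f (dyadicPt T n (k+a)))|
        ≤ (Kg*Kf) * (((m:ℝ)*(T/2^n))^β * ((m:ℝ)*(T/2^n))^α) := by
      refine hδ.trans ?_
      have hma : ((a:ℝ)*(T/2^n))^β ≤ ((m:ℝ)*(T/2^n))^β :=
        Real.rpow_le_rpow (by positivity)
          (mul_le_mul_of_nonneg_right (by exact_mod_cast Nat.le_of_lt haltm) (le_of_lt hh))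
          (le_of_lt hβ.1)
      have hmb : ((b:ℝ)*(T/2^n))^α ≤ ((m:ℝ)*(T/2^n))^α :=
        Real.rpow_le_rpow (by positivity)
          (mul_le_mul_of_nonneg_right (by exact_mod_cast Nat.le_of_lt hbltm) (le_of_lt hh))
          (le_of_lt hα.1)
      have h5 : (0:ℝ) ≤ ((a:ℝ)*(T/2^n))^β := Real.rpow_nonneg (by positivity) _
      have h6 : (0:ℝ) ≤ ((m:ℝ)*(T/2^n))^α := Real.rpow_nonneg (by positivity) _
      have h7 : (0:ℝ) ≤ Kf * ((b:ℝ)*(T/2^n))^α :=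
        mul_nonneg hKf (Real.rpow_nonneg (by positivity) _)
      nlinarith [mul_le_mul hma hmb (Real.rpow_nonneg (by positivity) α) (Real.rpow_nonneg (by positivity) β)]
    have hprod : ((m:ℝ)*(T/2^n))^β * ((m:ℝ)*(T/2^n))^α = ((m:ℝ)*(T/2^n))^(α+β) := by
      have hmh : (0:ℝ) < (m:ℝ)*(T/2^n) := by
        have : (0:ℝ) < (m:ℝ) := by exact_mod_cast Nat.lt_of_lt_of_le Nat.zero_lt_two hm
        positivity
      rw [← Real.rpow_add hmh]; ring_nf
    rw [hprod] at hδ'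
    -- triangle inequality
    have htri : |(∑ j ∈ Finset.Ico k (k+m),
          g (dyadicPt T n j) (f (dyadicPt T n (j+1)) - f (dyadicPt T n j)))
        - g (dyadicPt T n k) (f (dyadicPt T n (k+m)) - f (dyadicPt T n k))|
        ≤ youngC (α+β) * (Kg*Kf) * ((a:ℝ) * (T / 2^n)) ^ (α+β)
          + youngC (α+β) * (Kg*Kf) * ((b:ℝ) * (T / 2^n)) ^ (α+β)
          + (Kg*Kf) * ((m:ℝ)*(T/2^n))^(α+β) := by
      rw [hsplit]
      set A := (∑ j ∈ Finset.Ico k (k+a),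
          g (dyadicPt T n j) (f (dyadicPt T n (j+1)) - f (dyadicPt T n j)))
        - g (dyadicPt T n k) (f (dyadicPt T n (k+a)) - f (dyadicPt T n k)) with hA
      set B := (∑ j ∈ Finset.Ico (k+a) (k+m),
          g (dyadicPt T n j) (f (dyadicPt T n (j+1)) - f (dyadicPt T n j)))
        - g (dyadicPt T n (k+a)) (f (dyadicPt T n (k+m)) - f (dyadicPt T n (k+a))) with hB
      set D := g (dyadicPt T n k) (f (dyadicPt T n (k+m)) - f (dyadicPt T n k))
        - g (dyadicPt T n k) (f (dyadicPt T n (k+a)) - f (dyadicPt T n k))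
        - g (dyadicPt T n (k+a)) (f (dyadicPt T n (k+m)) - f (dyadicPt T n (k+a))) with hD
      have e : (∑ j ∈ Finset.Ico k (k+a),
            g (dyadicPt T n j) (f (dyadicPt T n (j+1)) - f (dyadicPt T n j)))
          + (∑ j ∈ Finset.Ico (k+a) (k+m),
            g (dyadicPt T n j) (f (dyadicPt T n (j+1)) - f (dyadicPt T n j)))
          - g (dyadicPt T n k) (f (dyadicPt T n (k+m)) - f (dyadicPt T n k))
          = A + B + (-D) := by rw [hA, hB, hD]; ring
      rw [e]
      refine (abs_add_three _ _ _).trans ?_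
      rw [abs_neg]
      exact add_le_add (add_le_add IH1 IH2) hδ'
    refine htri.trans ?_
    -- numeric inequality
    have hmul : ∀ (i : ℕ), ((i:ℝ) * (T / 2^n)) ^ (α+β) = ((i:ℝ))^(α+β) * ((T/2^n))^(α+β) := by
      intro i; exact Real.mul_rpow (by positivity) (le_of_lt hh)
    rw [hmul a, hmul b, hmul m]
    have hys := young_split hαβ a b ha1 haleb hblea
    have habR : (a:ℝ) + (b:ℝ) = (m:ℝ) := by exact_mod_cast congrArg (Nat.cast (R:=ℝ)) hab
    rw [habR] at hys
    have hhp : (0:ℝ) ≤ (T/2^n)^(α+β) := Real.rpow_nonneg (le_of_lt hh) _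
    nlinarith [mul_le_mul_of_nonneg_left hys (mul_nonneg hK hhp)]

end Young

lemma sum_range_two_mul' (a : ℕ → ℝ) (k : ℕ) :
    ∑ j ∈ Finset.range (2*k), a j = ∑ i ∈ Finset.range k, (a (2*i) + a (2*i+1)) := by
  induction k with
  | zero => simp
  | succ k ih =>
    rw [show 2*(k+1) = (2*k)+1+1 by ring]
    rw [Finset.sum_range_succ, Finset.sum_range_succ, ih, Finset.sum_range_succ]
    ring

set_option maxHeartbeats 2000000 in
open Filter Topology in
theorem young_integral_exists {X : Type*} [NormedAddCommGroup X] [NormedSpace ℝ X]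
    (T α β : ℝ) (hT : 0 < T) (hα : α ∈ Set.Ioo (0:ℝ) 1) (hβ : β ∈ Set.Ioo (0:ℝ) 1)
    (hαβ : 1 < α + β) :
    ∃ C : ℝ, 0 < C ∧
      ∀ (f : ℝ → X) (g : ℝ → (X →L[ℝ] ℝ)) (Kf Kg : ℝ),
        (∀ s ∈ Icc (0:ℝ) T, ∀ t ∈ Icc (0:ℝ) T, ‖f t - f s‖ ≤ Kf * |t - s| ^ α) →
        (∀ t ∈ Icc (0:ℝ) T, ‖g t‖ ≤ Kg) →
        (∀ s ∈ Icc (0:ℝ) T, ∀ t ∈ Icc (0:ℝ) T, ‖g t - g s‖ ≤ Kg * |t - s| ^ β) →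
        ∃ I : ℝ → ℝ, I 0 = 0 ∧
          (∀ s ∈ Icc (0:ℝ) T, ∀ t ∈ Icc (0:ℝ) T,
            |I t - I s - g s (f t - f s)| ≤ C * Kg * Kf * |t - s| ^ (α + β)) ∧
          (∀ t ∈ Icc (0:ℝ) T, |I t| ≤ C * Kg * Kf) ∧
          (∀ s ∈ Icc (0:ℝ) T, ∀ t ∈ Icc (0:ℝ) T,
            |I t - I s| ≤ C * Kg * Kf * |t - s| ^ α) := by
  obtain ⟨hα0, hα1⟩ := hα
  obtain ⟨hβ0, hβ1⟩ := hβ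
  set c := youngC (α+β) with hcdef
  have hc : 0 < c := youngC_pos hαβ
  have hTθ : (0:ℝ) ≤ T ^ (α+β) := Real.rpow_nonneg hT.le _
  have hTα : (0:ℝ) ≤ T ^ α := Real.rpow_nonneg hT.le _
  have hTβ : (0:ℝ) ≤ T ^ β := Real.rpow_nonneg hT.le _
  refine ⟨(c+1) * (T^(α+β) + T^β + 1) + T^α + 1, by nlinarith, ?_⟩
  intro f g Kf Kg hf hgb hg
  have h0T : (0:ℝ) ∈ Icc (0:ℝ) T := ⟨le_refl 0, hT.le⟩
  have hTT : T ∈ Icc (0:ℝ) T := ⟨hT.le, le_refl T⟩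
  have hKg : 0 ≤ Kg := le_trans (norm_nonneg _) (hgb 0 h0T)
  have hKf : 0 ≤ Kf := by
    have h1 := hf 0 h0T T hTT
    have h2 : (0:ℝ) < |T - 0| ^ α := by
      apply Real.rpow_pos_of_pos; rw [sub_zero, abs_of_pos hT]; exact hT
    nlinarith [norm_nonneg (f T - f 0)]
  have hK : 0 ≤ Kg * Kf := mul_nonneg hKg hKf
  set J : ℕ → ℝ → ℝ := fun n t => ∑ j ∈ Finset.range (⌊2^n * t / T⌋₊),
      g (dyadicPt T n j) (f (dyadicPt T n (j+1)) - f (dyadicPt T n j)) with hJdef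
  set I : ℝ → ℝ := fun t => limUnder Filter.atTop (fun n => J n t) with hIdef
  have hfloor_le : ∀ t ∈ Icc (0:ℝ) T, ∀ n : ℕ, ⌊(2:ℝ)^n * t / T⌋₊ ≤ 2^n := by
    intro t ht n
    have h1 : (2:ℝ)^n * t / T ≤ ((2^n : ℕ) : ℝ) := by
      rw [div_le_iff₀ hT]
      push_cast
      nlinarith [pow_pos (show (0:ℝ) < 2 by norm_num) n, ht.1, ht.2]
    calc ⌊(2:ℝ)^n * t / T⌋₊ ≤ ⌊((2^n : ℕ):ℝ)⌋₊ := Nat.floor_le_floor h1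
      _ = 2^n := Nat.floor_natCast _
  have hgeo : Filter.Tendsto (fun n : ℕ => T/(2:ℝ)^n) Filter.atTop (𝓝 0) := by
    have h : (fun n : ℕ => T/(2:ℝ)^n) = fun n : ℕ => T * ((1:ℝ)/2)^n := by
      funext n; rw [div_pow, one_pow]; ring
    rw [h]
    simpa using (tendsto_pow_atTop_nhds_zero_of_lt_one (by norm_num : (0:ℝ) ≤ 1/2)
      (by norm_num : (1:ℝ)/2 < 1)).const_mul T
  have hstep : ∀ t ∈ Icc (0:ℝ) T, ∀ n : ℕ, dist (J n t) (J (n+1) t) ≤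
      (Kg*Kf) * ((2:ℝ)^n * (T/2^(n+1))^(α+β) + (T/2^(n+1))^α) := by
    intro t ht n
    have hh' : (0:ℝ) < T / 2^(n+1) := by positivity
    set k := ⌊(2:ℝ)^n * t / T⌋₊ with hkd
    set k' := ⌊(2:ℝ)^(n+1) * t / T⌋₊ with hk'd
    have hx0 : (0:ℝ) ≤ (2:ℝ)^n * t / T :=
      div_nonneg (mul_nonneg (by positivity) ht.1) hT.le
    have hdbl : (2:ℝ)^(n+1) * t / T = 2 * ((2:ℝ)^n * t / T) := by ring
    have h2k : 2*k ≤ k' := by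
      rw [hk'd]
      apply Nat.le_floor
      rw [hdbl]
      push_cast
      nlinarith [Nat.floor_le hx0]
    have hk'le : k' ≤ 2*k + 1 := by
      have h1 : (2:ℝ)^(n+1)*t/T < ((2*k+2 : ℕ) : ℝ) := by
        rw [hdbl]
        push_cast
        nlinarith [Nat.lt_floor_add_one ((2:ℝ)^n*t/T)]
      have h2 := (Nat.floor_lt (by rw [hdbl]; positivity)).mpr h1
      omega
    have hk2n : k ≤ 2^n := hfloor_le t ht n
    have hk'2n : k' ≤ 2^(n+1) := hfloor_le t ht (n+1)
    have halign : ∀ i : ℕ, dyadicPt T (n+1) (2*i) = dyadicPt T n i := by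
      intro i; unfold dyadicPt; push_cast; rw [pow_succ]; ring
    have hQd : ∀ m j : ℕ, dyadicPt T m (j+1) - dyadicPt T m j = T/2^m := by
      intro m j; unfold dyadicPt; push_cast; ring
    have hsplit : J (n+1) t = (∑ j ∈ Finset.range (2*k),
          g (dyadicPt T (n+1) j) (f (dyadicPt T (n+1) (j+1)) - f (dyadicPt T (n+1) j)))
        + ∑ j ∈ Finset.Ico (2*k) k',
          g (dyadicPt T (n+1) j) (f (dyadicPt T (n+1) (j+1)) - f (dyadicPt T (n+1) j)) := by
      rw [hJdef]
      simp only []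
      rw [Finset.range_eq_Ico, ← Finset.sum_Ico_consecutive _ (Nat.zero_le (2*k)) h2k,
        ← Finset.range_eq_Ico]
    have hpair := sum_range_two_mul' (fun j =>
      g (dyadicPt T (n+1) j) (f (dyadicPt T (n+1) (j+1)) - f (dyadicPt T (n+1) j))) k
    have hdiffsum : J (n+1) t - J n t
        = (∑ i ∈ Finset.range k,
            (g (dyadicPt T (n+1) (2*i)) (f (dyadicPt T (n+1) (2*i+1)) - f (dyadicPt T (n+1) (2*i)))
             + g (dyadicPt T (n+1) (2*i+1)) (f (dyadicPt T (n+1) (2*i+1+1)) - f (dyadicPt T (n+1) (2*i+1)))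
             - g (dyadicPt T n i) (f (dyadicPt T n (i+1)) - f (dyadicPt T n i))))
          + ∑ j ∈ Finset.Ico (2*k) k',
            g (dyadicPt T (n+1) j) (f (dyadicPt T (n+1) (j+1)) - f (dyadicPt T (n+1) j)) := by
      rw [hsplit, hpair, hJdef]
      simp only []
      rw [Finset.sum_sub_distrib]
      ring
    -- bound for each pair term
    have hterm : ∀ i ∈ Finset.range k,
        |g (dyadicPt T (n+1) (2*i)) (f (dyadicPt T (n+1) (2*i+1)) - f (dyadicPt T (n+1) (2*i)))
          + g (dyadicPt T (n+1) (2*i+1)) (f (dyadicPt T (n+1) (2*i+1+1)) - f (dyadicPt T (n+1) (2*i+1)))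
          - g (dyadicPt T n i) (f (dyadicPt T n (i+1)) - f (dyadicPt T n i))|
        ≤ (Kg*Kf) * (T/2^(n+1))^(α+β) := by
      intro i hi
      have hik : i < k := Finset.mem_range.mp hi
      have hi1 : 2*i+1+1 ≤ 2^(n+1) := by
        have : i + 1 ≤ 2^n := by omega
        have : 2*(i+1) ≤ 2*2^n := by omega
        omega
      have hmx := dyadicPt_mem T hT (n := n+1) (j := 2*i) (by omega)
      have hmy := dyadicPt_mem T hT (n := n+1) (j := 2*i+1) (by omega)
      have hmz := dyadicPt_mem T hT (n := n+1) (j := 2*i+1+1) (by omega)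
      have hδ := young_delta T α β Kf Kg f g hf hg hmx hmy hmz
      have e1 : dyadicPt T n i = dyadicPt T (n+1) (2*i) := (halign i).symm
      have e2 : dyadicPt T n (i+1) = dyadicPt T (n+1) (2*i+1+1) := by
        rw [show 2*i+1+1 = 2*(i+1) by omega, halign (i+1)]
      have eabs : ∀ j : ℕ, |dyadicPt T (n+1) (j+1) - dyadicPt T (n+1) j| = T/2^(n+1) := by
        intro j; rw [hQd (n+1) j]; exact abs_of_pos hh'
      rw [eabs, eabs] at hδ
      have e3 : (Kg * (T/2^(n+1))^β) * (Kf * (T/2^(n+1))^α) = (Kg*Kf) * (T/2^(n+1))^(α+β) := by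
        rw [Real.rpow_add hh']
        ring
      rw [e3] at hδ
      rw [e1, e2]
      calc |g (dyadicPt T (n+1) (2*i)) (f (dyadicPt T (n+1) (2*i+1)) - f (dyadicPt T (n+1) (2*i)))
          + g (dyadicPt T (n+1) (2*i+1)) (f (dyadicPt T (n+1) (2*i+1+1)) - f (dyadicPt T (n+1) (2*i+1)))
          - g (dyadicPt T (n+1) (2*i)) (f (dyadicPt T (n+1) (2*i+1+1)) - f (dyadicPt T (n+1) (2*i)))|
          = |g (dyadicPt T (n+1) (2*i)) (f (dyadicPt T (n+1) (2*i+1+1)) - f (dyadicPt T (n+1) (2*i)))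
            - g (dyadicPt T (n+1) (2*i)) (f (dyadicPt T (n+1) (2*i+1)) - f (dyadicPt T (n+1) (2*i)))
            - g (dyadicPt T (n+1) (2*i+1)) (f (dyadicPt T (n+1) (2*i+1+1)) - f (dyadicPt T (n+1) (2*i+1)))| := by
            rw [abs_sub_comm]
            congr 1
            ring
        _ ≤ (Kg*Kf) * (T/2^(n+1))^(α+β) := hδ
    -- bound for the tail term
    have htail : |∑ j ∈ Finset.Ico (2*k) k',
          g (dyadicPt T (n+1) j) (f (dyadicPt T (n+1) (j+1)) - f (dyadicPt T (n+1) j))|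
        ≤ (Kg*Kf) * (T/2^(n+1))^α := by
      refine (Finset.abs_sum_le_sum_abs _ _).trans ?_
      have hbd : ∀ j ∈ Finset.Ico (2*k) k',
          |g (dyadicPt T (n+1) j) (f (dyadicPt T (n+1) (j+1)) - f (dyadicPt T (n+1) j))|
          ≤ (Kg*Kf) * (T/2^(n+1))^α := by
        intro j hj
        have hjk : j < k' := (Finset.mem_Ico.mp hj).2
        have hmj := dyadicPt_mem T hT (n := n+1) (j := j) (by omega)
        have hmj1 := dyadicPt_mem T hT (n := n+1) (j := j+1) (by omega)
        have hfb := hf (dyadicPt T (n+1) j) hmj (dyadicPt T (n+1) (j+1)) hmj1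
        rw [hQd (n+1) j, abs_of_pos hh'] at hfb
        calc |g (dyadicPt T (n+1) j) (f (dyadicPt T (n+1) (j+1)) - f (dyadicPt T (n+1) j))|
            = ‖g (dyadicPt T (n+1) j) (f (dyadicPt T (n+1) (j+1)) - f (dyadicPt T (n+1) j))‖ :=
              (Real.norm_eq_abs _).symm
          _ ≤ ‖g (dyadicPt T (n+1) j)‖ * ‖f (dyadicPt T (n+1) (j+1)) - f (dyadicPt T (n+1) j)‖ :=
              ContinuousLinearMap.le_opNorm _ _
          _ ≤ Kg * (Kf * (T/2^(n+1))^α) :=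
              mul_le_mul (hgb _ hmj) hfb (norm_nonneg _) hKg
          _ = (Kg*Kf) * (T/2^(n+1))^α := by ring
      calc ∑ j ∈ Finset.Ico (2*k) k',
            |g (dyadicPt T (n+1) j) (f (dyadicPt T (n+1) (j+1)) - f (dyadicPt T (n+1) j))|
          ≤ ∑ _j ∈ Finset.Ico (2*k) k', (Kg*Kf) * (T/2^(n+1))^α :=
            Finset.sum_le_sum hbd
        _ = ((k' - 2*k : ℕ) : ℝ) * ((Kg*Kf) * (T/2^(n+1))^α) := by
            rw [Finset.sum_const, Nat.card_Ico, nsmul_eq_mul]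
        _ ≤ 1 * ((Kg*Kf) * (T/2^(n+1))^α) := by
            apply mul_le_mul_of_nonneg_right _ (mul_nonneg hK (Real.rpow_nonneg hh'.le _))
            have : k' - 2*k ≤ 1 := by omega
            exact_mod_cast this
        _ = (Kg*Kf) * (T/2^(n+1))^α := one_mul _
    -- combine
    rw [Real.dist_eq, abs_sub_comm, hdiffsum]
    have hsum1 : |∑ i ∈ Finset.range k,
        (g (dyadicPt T (n+1) (2*i)) (f (dyadicPt T (n+1) (2*i+1)) - f (dyadicPt T (n+1) (2*i)))
         + g (dyadicPt T (n+1) (2*i+1)) (f (dyadicPt T (n+1) (2*i+1+1)) - f (dyadicPt T (n+1) (2*i+1)))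
         - g (dyadicPt T n i) (f (dyadicPt T n (i+1)) - f (dyadicPt T n i)))|
        ≤ (2:ℝ)^n * ((Kg*Kf) * (T/2^(n+1))^(α+β)) := by
      refine (Finset.abs_sum_le_sum_abs _ _).trans ?_
      refine (Finset.sum_le_sum hterm).trans ?_
      rw [Finset.sum_const, Finset.card_range, nsmul_eq_mul]
      apply mul_le_mul_of_nonneg_right _ (mul_nonneg hK (Real.rpow_nonneg hh'.le _))
      calc (k:ℝ) ≤ ((2^n : ℕ) : ℝ) := by exact_mod_cast hk2n
        _ = (2:ℝ)^n := by push_cast; ring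
    refine ((abs_add_le _ _).trans (add_le_add hsum1 htail)).trans_eq (by ring)

  have hsummable : Summable (fun n : ℕ =>
      (Kg*Kf) * ((2:ℝ)^n * (T/2^(n+1))^(α+β) + (T/2^(n+1))^α)) := by
    apply Summable.mul_left
    have h2 : (0:ℝ) < 2 := by norm_num
    have gen : ∀ γ : ℝ, ∀ n : ℕ, ((T:ℝ)/2^(n+1))^γ
        = (T^γ * (2:ℝ)^(-γ)) * ((2:ℝ)^(-γ))^n := by
      intro γ n
      induction n with
      | zero =>
        have e0 : (T:ℝ)/2^(0+1) = T * 2⁻¹ := by ring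
        rw [e0, Real.mul_rpow hT.le (by norm_num), Real.inv_rpow h2.le, pow_zero,
          mul_one, Real.rpow_neg h2.le]
      | succ n ih =>
        have e1 : (T:ℝ)/2^(n+2) = (T/2^(n+1)) * (2:ℝ)⁻¹ := by
          rw [pow_succ]; field_simp
        rw [e1, Real.mul_rpow (by positivity) (by positivity), ih,
          Real.inv_rpow h2.le, ← Real.rpow_neg h2.le, pow_succ]
        ring
    apply Summable.add
    · have e : ∀ n : ℕ, (2:ℝ)^n * (T/2^(n+1))^(α+β)
          = (T^(α+β) * (2:ℝ)^(-(α+β))) * ((2:ℝ) * (2:ℝ)^(-(α+β)))^n := by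
        intro n
        rw [gen (α+β) n, mul_pow]
        ring
      have hr0 : (0:ℝ) ≤ (2:ℝ) * (2:ℝ)^(-(α+β)) :=
        mul_nonneg h2.le (Real.rpow_nonneg h2.le _)
      have hr1 : (2:ℝ) * (2:ℝ)^(-(α+β)) < 1 := by
        have : (2:ℝ) * (2:ℝ)^(-(α+β)) = (2:ℝ)^(1-(α+β)) := by
          rw [Real.rpow_sub h2, Real.rpow_one, Real.rpow_neg h2.le, div_eq_mul_inv]
        rw [this]
        exact Real.rpow_lt_one_of_one_lt_of_neg (by norm_num) (by linarith)
      exact ((summable_geometric_of_lt_one hr0 hr1).mul_left _).congr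
        (fun n => (e n).symm)
    · have hr0 : (0:ℝ) ≤ (2:ℝ)^(-α) := Real.rpow_nonneg h2.le _
      have hr1 : (2:ℝ)^(-α) < 1 :=
        Real.rpow_lt_one_of_one_lt_of_neg (by norm_num) (by linarith)
      exact ((summable_geometric_of_lt_one hr0 hr1).mul_left _).congr
        (fun n => (gen α n).symm)
  have htend : ∀ t ∈ Icc (0:ℝ) T,
      Filter.Tendsto (fun n => J n t) Filter.atTop (𝓝 (I t)) := fun t ht =>
    (cauchySeq_of_dist_le_of_summable _ (hstep t ht) hsummable).tendsto_limUnder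
  have hI0 : I 0 = 0 := by
    have hJ0 : (fun n => J n 0) = fun _ : ℕ => (0:ℝ) := by
      funext n; rw [hJdef]; simp
    rw [hIdef]
    simp only [hJ0]
    exact Filter.Tendsto.limUnder_eq tendsto_const_nhds
  have hsew : ∀ s ∈ Icc (0:ℝ) T, ∀ t ∈ Icc (0:ℝ) T, s ≤ t →
      |I t - I s - g s (f t - f s)| ≤ c * (Kg*Kf) * (t-s)^(α+β) := by
    intro s hs t ht hst
    rcases eq_or_lt_of_le hst with rfl | hlt
    · simp [Real.zero_rpow (show α+β ≠ 0 by linarith)]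
    · have hkl : ∀ n : ℕ, ⌊(2:ℝ)^n * s / T⌋₊ ≤ ⌊(2:ℝ)^n * t / T⌋₊ := by
        intro n
        apply Nat.floor_le_floor
        gcongr
      have hPk_ub : ∀ n : ℕ, dyadicPt T n ⌊(2:ℝ)^n * s / T⌋₊ ≤ s := by
        intro n
        have hx0 : (0:ℝ) ≤ (2:ℝ)^n * s / T :=
          div_nonneg (mul_nonneg (by positivity) hs.1) hT.le
        have h1 := Nat.floor_le hx0
        have h2 : (⌊(2:ℝ)^n * s / T⌋₊ : ℝ) * (T/2^n) ≤ ((2:ℝ)^n * s / T) * (T/2^n) :=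
          mul_le_mul_of_nonneg_right h1 (by positivity)
        have e : ((2:ℝ)^n * s / T) * (T/2^n) = s := by field_simp
        unfold dyadicPt
        linarith
      have hPk_lb : ∀ n : ℕ, s - T/2^n < dyadicPt T n ⌊(2:ℝ)^n * s / T⌋₊ := by
        intro n
        have h1 := Nat.sub_one_lt_floor ((2:ℝ)^n * s / T)
        have h2 : ((2:ℝ)^n * s / T - 1) * (T/2^n) < (⌊(2:ℝ)^n * s / T⌋₊ : ℝ) * (T/2^n) :=
          mul_lt_mul_of_pos_right h1 (by positivity)
        have e : ((2:ℝ)^n * s / T - 1) * (T/2^n) = s - T/2^n := by field_simp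
        unfold dyadicPt
        linarith
      have hPl_ub : ∀ n : ℕ, dyadicPt T n ⌊(2:ℝ)^n * t / T⌋₊ ≤ t := by
        intro n
        have hx0 : (0:ℝ) ≤ (2:ℝ)^n * t / T :=
          div_nonneg (mul_nonneg (by positivity) ht.1) hT.le
        have h1 := Nat.floor_le hx0
        have h2 : (⌊(2:ℝ)^n * t / T⌋₊ : ℝ) * (T/2^n) ≤ ((2:ℝ)^n * t / T) * (T/2^n) :=
          mul_le_mul_of_nonneg_right h1 (by positivity)
        have e : ((2:ℝ)^n * t / T) * (T/2^n) = t := by field_simp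
        unfold dyadicPt
        linarith
      have hPl_lb : ∀ n : ℕ, t - T/2^n < dyadicPt T n ⌊(2:ℝ)^n * t / T⌋₊ := by
        intro n
        have h1 := Nat.sub_one_lt_floor ((2:ℝ)^n * t / T)
        have h2 : ((2:ℝ)^n * t / T - 1) * (T/2^n) < (⌊(2:ℝ)^n * t / T⌋₊ : ℝ) * (T/2^n) :=
          mul_lt_mul_of_pos_right h1 (by positivity)
        have e : ((2:ℝ)^n * t / T - 1) * (T/2^n) = t - T/2^n := by field_simp
        unfold dyadicPt
        linarith
      have hmemPk : ∀ n : ℕ, dyadicPt T n ⌊(2:ℝ)^n * s / T⌋₊ ∈ Icc (0:ℝ) T :=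
        fun n => dyadicPt_mem T hT (hfloor_le s hs n)
      have hmemPl : ∀ n : ℕ, dyadicPt T n ⌊(2:ℝ)^n * t / T⌋₊ ∈ Icc (0:ℝ) T :=
        fun n => dyadicPt_mem T hT (hfloor_le t ht n)
      have hcore : ∀ n : ℕ, |J n t - J n s
            - g (dyadicPt T n ⌊(2:ℝ)^n * s / T⌋₊)
                (f (dyadicPt T n ⌊(2:ℝ)^n * t / T⌋₊) - f (dyadicPt T n ⌊(2:ℝ)^n * s / T⌋₊))|
          ≤ c * (Kg*Kf) * ((t - s) + T/2^n)^(α+β) := by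
        intro n
        have hJd : J n t - J n s = ∑ j ∈ Finset.Ico ⌊(2:ℝ)^n * s / T⌋₊ ⌊(2:ℝ)^n * t / T⌋₊,
            g (dyadicPt T n j) (f (dyadicPt T n (j+1)) - f (dyadicPt T n j)) := by
          rw [hJdef]
          simp only []
          exact (Finset.sum_Ico_eq_sub _ (hkl n)).symm
        have hco := young_core T α β Kf Kg f g hT ⟨hα0,hα1⟩ ⟨hβ0,hβ1⟩ hαβ hKf hKg hf hg
          n (⌊(2:ℝ)^n * t / T⌋₊ - ⌊(2:ℝ)^n * s / T⌋₊) ⌊(2:ℝ)^n * s / T⌋₊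
          (by have := hkl n; have := hfloor_le t ht n; omega)
        rw [show ⌊(2:ℝ)^n * s / T⌋₊ + (⌊(2:ℝ)^n * t / T⌋₊ - ⌊(2:ℝ)^n * s / T⌋₊)
            = ⌊(2:ℝ)^n * t / T⌋₊ by have := hkl n; omega] at hco
        rw [hJd]
        refine hco.trans ?_
        have hlen : ((⌊(2:ℝ)^n * t / T⌋₊ - ⌊(2:ℝ)^n * s / T⌋₊ : ℕ):ℝ) * (T/2^n)
            ≤ (t - s) + T/2^n := by
          have hcast : ((⌊(2:ℝ)^n * t / T⌋₊ - ⌊(2:ℝ)^n * s / T⌋₊ : ℕ):ℝ)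
              = (⌊(2:ℝ)^n * t / T⌋₊ : ℝ) - (⌊(2:ℝ)^n * s / T⌋₊ : ℝ) := by
            rw [Nat.cast_sub (hkl n)]
          rw [hcast, sub_mul]
          have e1 := hPl_ub n
          have e2 := hPk_lb n
          unfold dyadicPt at e1 e2
          linarith
        exact mul_le_mul_of_nonneg_left
          (Real.rpow_le_rpow (by positivity) hlen (by linarith)) (mul_nonneg hc.le hK)
      -- limits
      have hPkt : Filter.Tendsto (fun n : ℕ => dyadicPt T n ⌊(2:ℝ)^n * s / T⌋₊)
          Filter.atTop (𝓝 s) := by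
        apply tendsto_of_tendsto_of_tendsto_of_le_of_le
          (g := fun n : ℕ => s - T/2^n) (h := fun _ : ℕ => s)
        · simpa using tendsto_const_nhds.sub hgeo
        · exact tendsto_const_nhds
        · exact fun n => (hPk_lb n).le
        · exact fun n => hPk_ub n
      have hPlt : Filter.Tendsto (fun n : ℕ => dyadicPt T n ⌊(2:ℝ)^n * t / T⌋₊)
          Filter.atTop (𝓝 t) := by
        apply tendsto_of_tendsto_of_tendsto_of_le_of_le
          (g := fun n : ℕ => t - T/2^n) (h := fun _ : ℕ => t)
        · simpa using tendsto_const_nhds.sub hgeo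
        · exact tendsto_const_nhds
        · exact fun n => (hPl_lb n).le
        · exact fun n => hPl_ub n
      have hΔ : ∀ n : ℕ, ‖g (dyadicPt T n ⌊(2:ℝ)^n * s / T⌋₊)
              (f (dyadicPt T n ⌊(2:ℝ)^n * t / T⌋₊) - f (dyadicPt T n ⌊(2:ℝ)^n * s / T⌋₊))
            - g s (f t - f s)‖
          ≤ (Kg*Kf) * ((T/2^n)^β * T^α + ((T/2^n)^α + (T/2^n)^α)) := by
        intro n
        have hen : (0:ℝ) < T/2^n := by positivity
        have hks : |dyadicPt T n ⌊(2:ℝ)^n * s / T⌋₊ - s| ≤ T/2^n :=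
          abs_le.mpr ⟨by linarith [hPk_lb n], by linarith [hPk_ub n, hen.le]⟩
        have hlt' : |dyadicPt T n ⌊(2:ℝ)^n * t / T⌋₊ - t| ≤ T/2^n :=
          abs_le.mpr ⟨by linarith [hPl_lb n], by linarith [hPl_ub n, hen.le]⟩
        have split : g (dyadicPt T n ⌊(2:ℝ)^n * s / T⌋₊)
              (f (dyadicPt T n ⌊(2:ℝ)^n * t / T⌋₊) - f (dyadicPt T n ⌊(2:ℝ)^n * s / T⌋₊))
            - g s (f t - f s)
            = (g (dyadicPt T n ⌊(2:ℝ)^n * s / T⌋₊) - g s)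
                (f (dyadicPt T n ⌊(2:ℝ)^n * t / T⌋₊) - f (dyadicPt T n ⌊(2:ℝ)^n * s / T⌋₊))
              + (g s (f (dyadicPt T n ⌊(2:ℝ)^n * t / T⌋₊) - f t)
                 - g s (f (dyadicPt T n ⌊(2:ℝ)^n * s / T⌋₊) - f s)) := by
          simp only [ContinuousLinearMap.sub_apply, map_sub]
          ring
        rw [split]
        have hA : ‖(g (dyadicPt T n ⌊(2:ℝ)^n * s / T⌋₊) - g s)
              (f (dyadicPt T n ⌊(2:ℝ)^n * t / T⌋₊) - f (dyadicPt T n ⌊(2:ℝ)^n * s / T⌋₊))‖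
            ≤ (Kg * (T/2^n)^β) * (Kf * T^α) := by
          refine (ContinuousLinearMap.le_opNorm _ _).trans ?_
          have h1 : ‖g (dyadicPt T n ⌊(2:ℝ)^n * s / T⌋₊) - g s‖ ≤ Kg * (T/2^n)^β := by
            refine (hg s hs _ (hmemPk n)).trans ?_
            exact mul_le_mul_of_nonneg_left
              (Real.rpow_le_rpow (abs_nonneg _) hks hβ0.le) hKg
          have h2 : ‖f (dyadicPt T n ⌊(2:ℝ)^n * t / T⌋₊) - f (dyadicPt T n ⌊(2:ℝ)^n * s / T⌋₊)‖
              ≤ Kf * T^α := by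
            refine (hf _ (hmemPk n) _ (hmemPl n)).trans ?_
            apply mul_le_mul_of_nonneg_left _ hKf
            apply Real.rpow_le_rpow (abs_nonneg _) _ hα0.le
            have m1 := (hmemPk n).1; have m2 := (hmemPk n).2
            have m3 := (hmemPl n).1; have m4 := (hmemPl n).2
            rw [abs_le]; constructor <;> linarith
          exact mul_le_mul h1 h2 (norm_nonneg _) (mul_nonneg hKg (Real.rpow_nonneg hen.le _))
        have hB1 : ‖g s (f (dyadicPt T n ⌊(2:ℝ)^n * t / T⌋₊) - f t)‖ ≤ Kg * (Kf * (T/2^n)^α) := by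
          refine (ContinuousLinearMap.le_opNorm _ _).trans ?_
          refine mul_le_mul (hgb s hs) ?_ (norm_nonneg _) hKg
          refine (hf t ht _ (hmemPl n)).trans ?_
          exact mul_le_mul_of_nonneg_left
            (Real.rpow_le_rpow (abs_nonneg _) hlt' hα0.le) hKf
        have hB2 : ‖g s (f (dyadicPt T n ⌊(2:ℝ)^n * s / T⌋₊) - f s)‖ ≤ Kg * (Kf * (T/2^n)^α) := by
          refine (ContinuousLinearMap.le_opNorm _ _).trans ?_
          refine mul_le_mul (hgb s hs) ?_ (norm_nonneg _) hKg
          refine (hf s hs _ (hmemPk n)).trans ?_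
          exact mul_le_mul_of_nonneg_left
            (Real.rpow_le_rpow (abs_nonneg _) hks hα0.le) hKf
        calc ‖_ + _‖ ≤ _ + _ := norm_add_le _ _
          _ ≤ (Kg * (T/2^n)^β) * (Kf * T^α)
              + (Kg * (Kf * (T/2^n)^α) + Kg * (Kf * (T/2^n)^α)) :=
            add_le_add hA ((norm_sub_le _ _).trans (add_le_add hB1 hB2))
          _ = (Kg*Kf) * ((T/2^n)^β * T^α + ((T/2^n)^α + (T/2^n)^α)) := by ring
      have hrb : Filter.Tendsto (fun n : ℕ => ((T:ℝ)/2^n)^β) Filter.atTop (𝓝 0) := by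
        have hcont := (Real.continuousAt_rpow_const 0 β (Or.inr hβ0.le)).tendsto
        have h := hcont.comp hgeo
        simpa [Real.zero_rpow (ne_of_gt hβ0), Function.comp_def] using h
      have hra : Filter.Tendsto (fun n : ℕ => ((T:ℝ)/2^n)^α) Filter.atTop (𝓝 0) := by
        have hcont := (Real.continuousAt_rpow_const 0 α (Or.inr hα0.le)).tendsto
        have h := hcont.comp hgeo
        simpa [Real.zero_rpow (ne_of_gt hα0), Function.comp_def] using h
      have hB0 : Filter.Tendsto (fun n : ℕ =>
          (Kg*Kf) * ((T/2^n)^β * T^α + ((T/2^n)^α + (T/2^n)^α))) Filter.atTop (𝓝 0) := by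
        have h := (((hrb.mul (tendsto_const_nhds (x := (T:ℝ)^α))).add
          (hra.add hra)).const_mul (Kg*Kf))
        simpa using h
      have hΞt : Filter.Tendsto (fun n : ℕ => g (dyadicPt T n ⌊(2:ℝ)^n * s / T⌋₊)
            (f (dyadicPt T n ⌊(2:ℝ)^n * t / T⌋₊) - f (dyadicPt T n ⌊(2:ℝ)^n * s / T⌋₊)))
          Filter.atTop (𝓝 (g s (f t - f s))) := by
        rw [← tendsto_sub_nhds_zero_iff]
        exact squeeze_zero_norm hΔ hB0
      have hLHS : Filter.Tendsto (fun n : ℕ => |J n t - J n s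
            - g (dyadicPt T n ⌊(2:ℝ)^n * s / T⌋₊)
                (f (dyadicPt T n ⌊(2:ℝ)^n * t / T⌋₊) - f (dyadicPt T n ⌊(2:ℝ)^n * s / T⌋₊))|)
          Filter.atTop (𝓝 |I t - I s - g s (f t - f s)|) :=
        (((htend t ht).sub (htend s hs)).sub hΞt).abs
      have hRHS : Filter.Tendsto (fun n : ℕ => c * (Kg*Kf) * ((t - s) + T/2^n)^(α+β))
          Filter.atTop (𝓝 (c * (Kg*Kf) * (t - s)^(α+β))) := by
        have hbase : Filter.Tendsto (fun n : ℕ => (t - s) + T/2^n) Filter.atTop (𝓝 (t - s)) := by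
          simpa using tendsto_const_nhds.add hgeo
        have hcont := (Real.continuousAt_rpow_const (t-s) (α+β)
          (Or.inl (ne_of_gt (by linarith)))).tendsto
        exact (hcont.comp hbase).const_mul _
      exact le_of_tendsto_of_tendsto' hLHS hRHS hcore
  have hsew2 : ∀ s ∈ Icc (0:ℝ) T, ∀ t ∈ Icc (0:ℝ) T,
      |I t - I s - g s (f t - f s)| ≤ (c+1) * (Kg*Kf) * |t-s|^(α+β) := by
    intro s hs t ht
    have hx0 : (0:ℝ) ≤ |t-s|^(α+β) := Real.rpow_nonneg (abs_nonneg _) _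
    rcases le_total s t with h | h
    · have h1 := hsew s hs t ht h
      rw [show t - s = |t-s| from (abs_of_nonneg (by linarith)).symm] at h1
      refine h1.trans ?_
      nlinarith [mul_nonneg hK hx0]
    · have h1 := hsew t ht s hs h
      have e1 : g s (f t - f s) = - g s (f s - f t) := by
        rw [show f t - f s = -(f s - f t) by abel, map_neg]
      have e2 : I t - I s - g s (f t - f s)
          = -(I s - I t - g t (f s - f t)) + (g s (f s - f t) - g t (f s - f t)) := by
        rw [e1]; ring
      have habs : |I t - I s - g s (f t - f s)|
          ≤ |I s - I t - g t (f s - f t)| + |g s (f s - f t) - g t (f s - f t)| := by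
        rw [e2]
        refine (abs_add_le _ _).trans ?_
        rw [abs_neg]
      have hGbd : |g s (f s - f t) - g t (f s - f t)|
          ≤ (Kg * |s - t|^β) * (Kf * |s - t|^α) := by
        calc |g s (f s - f t) - g t (f s - f t)| = ‖(g s - g t) (f s - f t)‖ := by
              rw [ContinuousLinearMap.sub_apply, Real.norm_eq_abs]
          _ ≤ ‖g s - g t‖ * ‖f s - f t‖ := (g s - g t).le_opNorm _
          _ ≤ (Kg * |s - t|^β) * (Kf * |s - t|^α) :=
              mul_le_mul (hg t ht s hs) (hf t ht s hs) (norm_nonneg _)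
                (mul_nonneg hKg (Real.rpow_nonneg (abs_nonneg _) _))
      have hxx : |s - t| = |t - s| := abs_sub_comm s t
      have e3 : (s - t)^(α+β) = |t-s|^(α+β) := by
        rw [← hxx, abs_of_nonneg (by linarith)]
      have e4 : (Kg * |s - t|^β) * (Kf * |s - t|^α) = (Kg*Kf) * |t-s|^(α+β) := by
        rw [hxx, Real.rpow_add' (abs_nonneg _) (by linarith : α + β ≠ 0)]
        ring
      rw [e3] at h1
      rw [e4] at hGbd
      calc |I t - I s - g s (f t - f s)| ≤ c * (Kg*Kf) * |t-s|^(α+β) + (Kg*Kf) * |t-s|^(α+β) :=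
            habs.trans (add_le_add h1 hGbd)
        _ = (c+1) * (Kg*Kf) * |t-s|^(α+β) := by ring
  refine ⟨I, hI0, ?_, ?_, ?_⟩
  · intro s hs t ht
    refine (hsew2 s hs t ht).trans ?_
    have h1 : (0:ℝ) ≤ |t-s|^(α+β) := Real.rpow_nonneg (abs_nonneg _) _
    have key : (c+1) * (Kg*Kf) ≤ ((c+1) * (T^(α+β) + T^β + 1) + T^α + 1) * (Kg*Kf) := by
      apply mul_le_mul_of_nonneg_right _ hK
      nlinarith [mul_nonneg (show (0:ℝ) ≤ c+1 by linarith) hTθ,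
        mul_nonneg (show (0:ℝ) ≤ c+1 by linarith) hTβ]
    calc (c+1) * (Kg*Kf) * |t-s|^(α+β)
        ≤ (((c+1) * (T^(α+β)+T^β+1)+T^α+1) * (Kg*Kf)) * |t-s|^(α+β) :=
          mul_le_mul_of_nonneg_right key h1
      _ = ((c+1)*(T^(α+β)+T^β+1)+T^α+1) * Kg * Kf * |t-s|^(α+β) := by ring
  · intro t ht
    have h1 := hsew 0 h0T t ht ht.1
    rw [hI0, sub_zero, sub_zero] at h1
    have h2 : |g 0 (f t - f 0)| ≤ Kg * (Kf * T^α) := by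
      rw [← Real.norm_eq_abs]
      calc ‖g 0 (f t - f 0)‖ ≤ ‖g 0‖ * ‖f t - f 0‖ := (g 0).le_opNorm _
        _ ≤ Kg * (Kf * T^α) := by
          have h3 := hf 0 h0T t ht
          have h4 : |t - 0|^α ≤ T^α := by
            apply Real.rpow_le_rpow (abs_nonneg _) _ hα0.le
            rw [sub_zero, abs_of_nonneg ht.1]; exact ht.2
          have h5 := hgb 0 h0T
          have h6 : ‖f t - f 0‖ ≤ Kf * T^α := h3.trans (mul_le_mul_of_nonneg_left h4 hKf)
          exact mul_le_mul h5 h6 (norm_nonneg _) hKg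
    have h7 : t^(α+β) ≤ T^(α+β) := Real.rpow_le_rpow ht.1 ht.2 (by linarith)
    have htri : |I t| ≤ |I t - g 0 (f t - f 0)| + |g 0 (f t - f 0)| := by
      have e : I t = (I t - g 0 (f t - f 0)) + g 0 (f t - f 0) := by ring
      calc |I t| = |(I t - g 0 (f t - f 0)) + g 0 (f t - f 0)| := congrArg abs e
        _ ≤ _ := abs_add_le _ _
    calc |I t| ≤ |I t - g 0 (f t - f 0)| + |g 0 (f t - f 0)| := htri
      _ ≤ c * (Kg*Kf) * T^(α+β) + Kg * (Kf * T^α) :=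
          add_le_add (h1.trans (mul_le_mul_of_nonneg_left h7 (mul_nonneg hc.le hK))) h2
      _ ≤ ((c+1) * (T^(α+β) + T^β + 1) + T^α + 1) * Kg * Kf := by
          nlinarith [mul_nonneg hK hTθ, mul_nonneg hK hTβ, mul_nonneg hK hTα,
            mul_nonneg (mul_nonneg hc.le hK) hTβ, mul_nonneg hc.le hK, hK]
  · intro s hs t ht
    have h1 := hsew2 s hs t ht
    have h2 : |g s (f t - f s)| ≤ Kg * (Kf * |t-s|^α) := by
      rw [← Real.norm_eq_abs]
      calc ‖g s (f t - f s)‖ ≤ ‖g s‖ * ‖f t - f s‖ := (g s).le_opNorm _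
        _ ≤ Kg * (Kf * |t-s|^α) :=
          mul_le_mul (hgb s hs) (hf s hs t ht) (norm_nonneg _) hKg
    have h3 : |t-s|^(α+β) ≤ T^β * |t-s|^α := by
      have e : |t-s|^(α+β) = |t-s|^α * |t-s|^β := by
        rw [← Real.rpow_add' (abs_nonneg _) (by linarith)]
      rw [e]
      have h4 : |t-s|^β ≤ T^β := by
        apply Real.rpow_le_rpow (abs_nonneg _) _ hβ0.le
        rw [abs_le]; constructor <;> [linarith [hs.1, ht.1, ht.2, hs.2]; linarith [hs.1, ht.1, ht.2, hs.2]]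
      nlinarith [Real.rpow_nonneg (abs_nonneg (t-s)) α, Real.rpow_nonneg (abs_nonneg (t-s)) β]
    have h5 : (0:ℝ) ≤ |t-s|^α := Real.rpow_nonneg (abs_nonneg _) _
    have htri : |I t - I s| ≤ |I t - I s - g s (f t - f s)| + |g s (f t - f s)| := by
      have e : I t - I s = (I t - I s - g s (f t - f s)) + g s (f t - f s) := by ring
      calc |I t - I s| = |(I t - I s - g s (f t - f s)) + g s (f t - f s)| := congrArg abs e
        _ ≤ _ := abs_add_le _ _
    calc |I t - I s| ≤ |I t - I s - g s (f t - f s)| + |g s (f t - f s)| := htri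
      _ ≤ (c+1) * (Kg*Kf) * (T^β * |t-s|^α) + Kg * (Kf * |t-s|^α) :=
          add_le_add (h1.trans (mul_le_mul_of_nonneg_left h3
            (mul_nonneg (by linarith) hK))) h2
      _ ≤ ((c+1) * (T^(α+β) + T^β + 1) + T^α + 1) * Kg * Kf * |t-s|^α := by
          nlinarith [mul_nonneg (mul_nonneg (mul_nonneg hK h5) hc.le) hTθ,
            mul_nonneg (mul_nonneg hK h5) hTθ, mul_nonneg (mul_nonneg hK h5) hc.le,
            mul_nonneg hK h5, mul_nonneg (mul_nonneg hK h5) hTα]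


/-- Young integration: for `f ∈ C^α([0,T];X)` and `g ∈ C^β([0,T];X*)` with `α+β>1`,
the Young integral `t ↦ ∫₀ᵗ ⟨g_r, df_r⟩` is well-defined (characterized by the sewing
local approximation property) and is `α`-Hölder with norm controlled by
`C ‖g‖_{C^β} ‖f‖_{C^α}`. -/
theorem stmt_0 {X : Type*} [NormedAddCommGroup X] [NormedSpace ℝ X]
    (T α β : ℝ) (hT : 0 < T) (hα : α ∈ Set.Ioo (0:ℝ) 1) (hβ : β ∈ Set.Ioo (0:ℝ) 1)
    (hαβ : 1 < α + β) :
    ∃ C : ℝ, 0 < C ∧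
      ∀ (f : ℝ → X) (g : ℝ → (X →L[ℝ] ℝ)) (Kf Kg : ℝ),
        (∀ s ∈ Icc (0:ℝ) T, ∀ t ∈ Icc (0:ℝ) T, ‖f t - f s‖ ≤ Kf * |t - s| ^ α) →
        (∀ t ∈ Icc (0:ℝ) T, ‖g t‖ ≤ Kg) →
        (∀ s ∈ Icc (0:ℝ) T, ∀ t ∈ Icc (0:ℝ) T, ‖g t - g s‖ ≤ Kg * |t - s| ^ β) →
        ∃ I : ℝ → ℝ, I 0 = 0 ∧
          (∀ s ∈ Icc (0:ℝ) T, ∀ t ∈ Icc (0:ℝ) T,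
            |I t - I s - g s (f t - f s)| ≤ C * Kg * Kf * |t - s| ^ (α + β)) ∧
          (∀ t ∈ Icc (0:ℝ) T, |I t| ≤ C * Kg * Kf) ∧
          (∀ s ∈ Icc (0:ℝ) T, ∀ t ∈ Icc (0:ℝ) T,
            |I t - I s| ≤ C * Kg * Kf * |t - s| ^ α) := by
  exact young_integral_exists T α β hT hα hβ hαβ
end

section
/- For w ∈ ℝ³ and H a symmetric trace-free 3×3 real matrix, define e(w,H) = (3/2) λ_max(w ⊗ w − H), where λ_max denotes the largest eigenvalue of a symmetric matrix. Then (1/2)|w|² ≤ e(w,H) and ‖H‖_op ≤ (4/3) e(w,H), where ‖H‖_op is the operator norm of H. -/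
open Matrix

/-- For `w ∈ ℝ³` and `H` symmetric trace-free, with
`e(w,H) = (3/2) λ_max(w⊗w − H)` (λ_max characterized as the greatest Rayleigh quotient),
one has `(1/2)|w|² ≤ e(w,H)` and `‖H‖_op ≤ (4/3) e(w,H)`. -/
theorem stmt_2 (w : Fin 3 → ℝ) (H : Matrix (Fin 3) (Fin 3) ℝ)
    (hH : H.IsSymm) (htr : H.trace = 0) (lam e : ℝ)
    (hlam : IsGreatest
      {r : ℝ | ∃ v : Fin 3 → ℝ, v ⬝ᵥ v = 1 ∧ v ⬝ᵥ ((vecMulVec w w - H) *ᵥ v) = r} lam)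
    (he : e = (3 / 2) * lam) :
    (1 / 2) * (w ⬝ᵥ w) ≤ e ∧
      ‖Matrix.toEuclideanCLM (𝕜 := ℝ) H‖ ≤ (4 / 3) * e := by
  have hub : ∀ v : Fin 3 → ℝ, v ⬝ᵥ v = 1 → v ⬝ᵥ ((vecMulVec w w - H) *ᵥ v) ≤ lam :=
    fun v hv => hlam.2 ⟨v, hv, rfl⟩
  have hquad : ∀ v : Fin 3 → ℝ,
      v ⬝ᵥ ((vecMulVec w w - H) *ᵥ v) = (w ⬝ᵥ v) ^ 2 - v ⬝ᵥ (H *ᵥ v) := by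
    intro v
    simp only [sub_mulVec, dotProduct_sub, vecMulVec, mulVec, dotProduct,
      Fin.sum_univ_three, Matrix.sub_apply, of_apply]
    ring
  -- Part 1: trace bound
  have hdiag : ∀ i : Fin 3, w i * w i - H i i ≤ lam := by
    intro i
    have h1 : (Pi.single i 1 : Fin 3 → ℝ) ⬝ᵥ Pi.single i 1 = 1 := by
      simp [dotProduct, Pi.single_apply]
    have h := hub _ h1
    rw [hquad] at h
    have h2 : w ⬝ᵥ (Pi.single i 1 : Fin 3 → ℝ) = w i := by
      simp [dotProduct, Pi.single_apply]
    have h3 : (Pi.single i 1 : Fin 3 → ℝ) ⬝ᵥ (H *ᵥ Pi.single i 1) = H i i := by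
      simp [dotProduct, mulVec, Pi.single_apply]
    rw [h2, h3] at h
    nlinarith [h]
  have htr3 : H 0 0 + H 1 1 + H 2 2 = 0 := by
    simpa [Matrix.trace, Fin.sum_univ_three] using htr
  have hw : w ⬝ᵥ w = w 0 * w 0 + w 1 * w 1 + w 2 * w 2 := by
    simp [dotProduct, Fin.sum_univ_three]
  have h3lam : w ⬝ᵥ w ≤ 3 * lam := by
    have d0 := hdiag 0; have d1 := hdiag 1; have d2 := hdiag 2
    rw [hw]; linarith
  have hwnn : 0 ≤ w ⬝ᵥ w := by rw [hw]; nlinarith [mul_self_nonneg (w 0), mul_self_nonneg (w 1), mul_self_nonneg (w 2)]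
  have hlam0 : 0 ≤ lam := by linarith
  refine ⟨by rw [he]; linarith, ?_⟩
  -- Part 2
  have hHerm : H.IsHermitian := by
    rw [Matrix.IsHermitian, Matrix.conjTranspose_eq_transpose_of_trivial]; exact hH
  set B := hHerm.eigenvectorBasis with hB
  set μ := hHerm.eigenvalues with hμ
  have hinner_dot : ∀ x y : EuclideanSpace ℝ (Fin 3),
      (inner ℝ x y : ℝ) = (x : Fin 3 → ℝ) ⬝ᵥ (y : Fin 3 → ℝ) := by
    intro x y
    simp [PiLp.inner_apply, RCLike.inner_apply, dotProduct, mul_comm]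
  have hunit : ∀ i, ((B i : Fin 3 → ℝ)) ⬝ᵥ (B i : Fin 3 → ℝ) = 1 := by
    intro i
    have h := B.orthonormal.1 i
    have h2 : (inner ℝ (B i) (B i) : ℝ) = 1 := by
      rw [real_inner_self_eq_norm_sq, h]; norm_num
    rw [hinner_dot] at h2; exact h2
  have hmv : ∀ i, H *ᵥ (B i : Fin 3 → ℝ) = μ i • (B i : Fin 3 → ℝ) :=
    fun i => hHerm.mulVec_eigenvectorBasis i
  have hBH : ∀ i, ((B i : Fin 3 → ℝ)) ⬝ᵥ (H *ᵥ (B i : Fin 3 → ℝ)) = μ i := by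
    intro i
    rw [hmv i, dotProduct_smul, hunit i]
    simp
  have hlow : ∀ i, -lam ≤ μ i := by
    intro i
    have h := hub _ (hunit i)
    rw [hquad, hBH i] at h
    nlinarith [sq_nonneg (w ⬝ᵥ (B i : Fin 3 → ℝ))]
  have hsum : μ 0 + μ 1 + μ 2 = 0 := by
    have hst := hHerm.conjStarAlgAut_star_eigenvectorUnitary
    rw [Unitary.conjStarAlgAut_apply, Unitary.coe_star, star_star] at hst
    have h1 : (star (hHerm.eigenvectorUnitary : Matrix (Fin 3) (Fin 3) ℝ) * H *
        (hHerm.eigenvectorUnitary : Matrix (Fin 3) (Fin 3) ℝ)).trace = H.trace := by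
      rw [Matrix.trace_mul_cycle,
        Matrix.mem_unitaryGroup_iff.mp hHerm.eigenvectorUnitary.2, one_mul]
    rw [hst, htr] at h1
    simpa [Matrix.trace_diagonal, Fin.sum_univ_three] using h1
  have hupp : ∀ i, μ i ≤ 2 * lam := by
    have l0 := hlow 0; have l1 := hlow 1; have l2 := hlow 2
    intro i
    match i with
    | 0 => linarith
    | 1 => linarith
    | 2 => linarith
  have hbound : ‖Matrix.toEuclideanCLM (𝕜 := ℝ) H‖ ≤ 2 * lam := by
    apply ContinuousLinearMap.opNorm_le_bound _ (by linarith)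
    intro x
    set T := Matrix.toEuclideanCLM (𝕜 := ℝ) H with hT
    have hTx : (T x : Fin 3 → ℝ) = H *ᵥ (x : Fin 3 → ℝ) :=
      Matrix.ofLp_toEuclideanCLM H x
    have hrepr : ∀ i, B.repr (T x) i = μ i * B.repr x i := by
      intro i
      rw [B.repr_apply_apply, B.repr_apply_apply, hinner_dot, hinner_dot, hTx,
        Matrix.dotProduct_mulVec, ← Matrix.mulVec_transpose, hH.eq, hmv i,
        smul_dotProduct]
      simp
    have hnTx : ‖T x‖ = ‖B.repr (T x)‖ := (LinearIsometryEquiv.norm_map B.repr _).symm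
    have hnx : ‖x‖ = ‖B.repr x‖ := (LinearIsometryEquiv.norm_map B.repr _).symm
    rw [hnTx, hnx, EuclideanSpace.norm_eq, EuclideanSpace.norm_eq]
    rw [show (2 * lam) * Real.sqrt (∑ i, ‖B.repr x i‖ ^ 2) =
        Real.sqrt ((2 * lam) ^ 2 * ∑ i, ‖B.repr x i‖ ^ 2) by
      rw [Real.sqrt_mul (sq_nonneg _), Real.sqrt_sq (by linarith)]]
    apply Real.sqrt_le_sqrt
    rw [Finset.mul_sum]
    apply Finset.sum_le_sum
    intro i _
    rw [hrepr i]
    have h1 : (μ i) ^ 2 ≤ (2 * lam) ^ 2 := by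
      have := hlow i; have := hupp i
      nlinarith
    have h2 : ‖μ i * B.repr x i‖ ^ 2 = (μ i) ^ 2 * ‖B.repr x i‖ ^ 2 := by
      rw [norm_mul, mul_pow, Real.norm_eq_abs, sq_abs]
    rw [h2]
    exact mul_le_mul_of_nonneg_right h1 (sq_nonneg _)
  rw [he]
  calc ‖Matrix.toEuclideanCLM (𝕜 := ℝ) H‖ ≤ 2 * lam := hbound
    _ = 4 / 3 * (3 / 2 * lam) := by ring
end

section
/- Let H be a real Hilbert space and (v_k)_{k≥0} a sequence in H such that: (i) the sequence of real numbers ‖v_k‖² converges; (ii) for all integers 0 ≤ m < k, |⟨v_k − v_{k−1}, v_m⟩| ≤ 2^{−k}. Then (v_k) is a Cauchy sequence in H. -/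
open Filter RealInnerProductSpace

lemma aux_tele {H : Type*} [NormedAddCommGroup H] [InnerProductSpace ℝ H]
    (v : ℕ → H)
    (hsmall : ∀ m k : ℕ, m < k → |⟪v k - v (k - 1), v m⟫| ≤ (2 : ℝ) ^ (-(k : ℤ)))
    (m : ℕ) : ∀ n, m ≤ n → |⟪v n - v m, v m⟫| ≤ (2:ℝ)^(-(m:ℤ)) - (2:ℝ)^(-(n:ℤ)) := by
  intro n hn
  induction n, hn using Nat.le_induction with
  | base => simp
  | succ n hn ih =>
    have h1 := hsmall m (n+1) (Nat.lt_succ_of_le hn)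
    simp only [Nat.add_sub_cancel] at h1
    have key : ⟪v (n+1) - v m, v m⟫ = ⟪v (n+1) - v n, v m⟫ + ⟪v n - v m, v m⟫ := by
      rw [← inner_add_left, sub_add_sub_cancel]
    rw [key]
    have h2 : (2:ℝ)^(-((n:ℤ)+1)) + (2:ℝ)^(-((n:ℤ)+1)) = (2:ℝ)^(-(n:ℤ)) := by
      rw [← two_mul, show -((n:ℤ)+1) = -(n:ℤ) + (-1) by ring,
        zpow_add₀ (two_ne_zero)]
      field_simp
    calc |⟪v (n+1) - v n, v m⟫ + ⟪v n - v m, v m⟫|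
        ≤ |⟪v (n+1) - v n, v m⟫| + |⟪v n - v m, v m⟫| := abs_add_le _ _
      _ ≤ (2:ℝ)^(-((n+1:ℕ):ℤ)) + ((2:ℝ)^(-(m:ℤ)) - (2:ℝ)^(-(n:ℤ))) :=
          add_le_add h1 ih
      _ ≤ (2:ℝ)^(-(m:ℤ)) - (2:ℝ)^(-((n+1:ℕ):ℤ)) := by
          push_cast
          nlinarith [h2]

/-- If `‖v_k‖²` converges and `|⟨v_k − v_{k−1}, v_m⟩| ≤ 2^{−k}` for all `m < k`, then
`(v_k)` is Cauchy in the Hilbert space. -/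
theorem stmt_8 {H : Type*} [NormedAddCommGroup H] [InnerProductSpace ℝ H]
    (v : ℕ → H) (l : ℝ)
    (hconv : Tendsto (fun k => ‖v k‖ ^ 2) atTop (nhds l))
    (hsmall : ∀ m k : ℕ, m < k → |⟪v k - v (k - 1), v m⟫| ≤ (2 : ℝ) ^ (-(k : ℤ))) :
    CauchySeq v := by
  have hc : CauchySeq (fun k => ‖v k‖ ^ 2) := hconv.cauchySeq
  rw [Metric.cauchySeq_iff]
  intro ε hε
  have hε2 : (0:ℝ) < ε^2/2 := by positivity
  obtain ⟨N₁, hN₁⟩ := Metric.cauchySeq_iff.mp hc (ε^2/2) hε2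
  obtain ⟨N₂, hN₂⟩ := exists_pow_lt_of_lt_one (show (0:ℝ) < ε^2/4 by positivity)
      (show (1/2:ℝ) < 1 by norm_num)
  have main : ∀ m n : ℕ, max N₁ N₂ ≤ m → m ≤ n → dist (v n) (v m) < ε := by
    intro m n hm hmn
    have hm1 : N₁ ≤ m := le_trans (le_max_left _ _) hm
    have hm2 : N₂ ≤ m := le_trans (le_max_right _ _) hm
    have hd := hN₁ n (le_trans hm1 hmn) m hm1
    rw [Real.dist_eq] at hd
    have htele := aux_tele v hsmall m n hmn
    have hmono : (2:ℝ)^(-(m:ℤ)) ≤ (1/2:ℝ)^N₂ := by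
      rw [show ((1:ℝ)/2)^N₂ = (2:ℝ)^(-(N₂:ℤ)) by
        rw [zpow_neg, zpow_natCast, one_div, inv_pow]]
      exact zpow_le_zpow_right₀ one_le_two
        (by exact_mod_cast neg_le_neg (Int.ofNat_le.mpr hm2))
    have hpos : (0:ℝ) < 2^(-(n:ℤ)) := by positivity
    have hx : ‖v n - v m‖^2 = ‖v n‖^2 - ‖v m‖^2 - 2*⟪v n - v m, v m⟫ := by
      have e : ⟪v n, v m⟫ = ⟪v n - v m, v m⟫ + ⟪v m, v m⟫ := by
        rw [← inner_add_left]; simp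
      rw [norm_sub_sq_real, e, real_inner_self_eq_norm_sq]; ring
    have hnn : ‖v n - v m‖^2 < ε^2 := by
      have hab := abs_le.mp htele
      have hab2 := abs_lt.mp hd
      rw [hx]; nlinarith
    rw [dist_eq_norm]
    exact lt_of_pow_lt_pow_left₀ 2 hε.le hnn
  refine ⟨max N₁ N₂, fun a ha b hb => ?_⟩
  rcases le_total a b with h | h
  · rw [dist_comm]; exact main a b ha h
  · exact main b a hb h
end
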